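/- arXiv:2509.15745 — 3 statements merged into one kernel-verified Lean document; each statement's English description precedes it below -/
import Mathlib

section
/- Let (M, d) be a metric space, Ω ⊆ M an open subset with nonempty boundary, and G a group of isometries of (M, d) preserving Ω (hence preserving ∂Ω). If there exist sequences (x_k) in Ω converging to a point x ∈ ∂Ω, a sequence (g_k) in G, and points y_k ∈ Ω converging to some y ∈ Ω with g_k(y_k) = x_k for all k, then one obtains a contradiction; consequently, if G acts on Ω with the property that some compact subset of Ω meets every G-orbit (quasi-homogeneity) and M is connected, then Ω = M. -/
open Filter Topology Metric

theorem aux_infDist_inv {M : Type*} [MetricSpace M] (Ω : Set M) (g : M → M)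
    (hg : Isometry g) (hbij : Function.Bijective g) (hpres : g '' Ω = Ω) (p : M) :
    infDist (g p) (frontier Ω) = infDist p (frontier Ω) := by
  have himg : g '' frontier Ω = frontier Ω := by
    have h2 := ((IsometryEquiv.mk (Equiv.ofBijective g hbij) hg).toHomeomorph).image_frontier Ω
    have h3 : ((IsometryEquiv.mk (Equiv.ofBijective g hbij) hg).toHomeomorph : M → M) = g := rfl
    rw [h3, hpres] at h2
    exact h2
  rw [show frontier Ω = g '' frontier Ω from himg.symm, infDist_image hg, himg]

theorem aux_pos {M : Type*} [MetricSpace M] (Ω : Set M) (hΩ : IsOpen Ω)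
    (hfr : (frontier Ω).Nonempty) {y : M} (hy : y ∈ Ω) : 0 < infDist y (frontier Ω) := by
  rw [← isClosed_frontier.notMem_iff_infDist_pos hfr]
  rw [hΩ.frontier_eq]
  exact fun h => h.2 hy

/-- Let `Ω` be an open subset of a metric space `M`, preserved by a group `G` of
isometries. (1) There is no sequence `x_k ∈ Ω` converging to a boundary point
which is the image under isometries `g_k ∈ G` of a sequence `y_k` converging inside `Ω`.
(2) Consequently, if `M` is connected and the `G`-action on `Ω` is quasi-homogeneous
(some compact subset of `Ω` meets every orbit), then `Ω = M`. -/
theorem stmt_2 {M : Type*} [MetricSpace M] [ConnectedSpace M]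
    (Ω : Set M) (hΩ : IsOpen Ω) (hne : Ω.Nonempty)
    (G : Set (M → M))
    (hiso : ∀ g ∈ G, Isometry g ∧ Function.Bijective g)
    (hpres : ∀ g ∈ G, g '' Ω = Ω) :
    (∀ (x : M) (xk yk : ℕ → M) (gk : ℕ → M → M) (y : M),
      x ∈ frontier Ω → (∀ k, xk k ∈ Ω) → Tendsto xk atTop (𝓝 x) →
      (∀ k, gk k ∈ G) → (∀ k, yk k ∈ Ω) → y ∈ Ω → Tendsto yk atTop (𝓝 y) →
      (∀ k, gk k (yk k) = xk k) → False) ∧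
    ((∃ K : Set M, IsCompact K ∧ K ⊆ Ω ∧ ∀ x ∈ Ω, ∃ g ∈ G, g x ∈ K) →
      Ω = Set.univ) := by
  constructor
  · intro x xk yk gk y hx hxk hxlim hgk hyk hy hylim heq
    have hfr : (frontier Ω).Nonempty := ⟨x, hx⟩
    have hd : ∀ k, infDist (xk k) (frontier Ω) = infDist (yk k) (frontier Ω) := by
      intro k
      rw [← heq k]
      exact aux_infDist_inv Ω (gk k) (hiso _ (hgk k)).1 (hiso _ (hgk k)).2 (hpres _ (hgk k)) _
    have t1 : Tendsto (fun k => infDist (xk k) (frontier Ω)) atTop (𝓝 0) := by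
      have := ((continuous_infDist_pt (frontier Ω)).tendsto x).comp hxlim
      rwa [infDist_zero_of_mem hx] at this
    have t2 : Tendsto (fun k => infDist (xk k) (frontier Ω)) atTop
        (𝓝 (infDist y (frontier Ω))) := by
      simp only [hd]
      exact ((continuous_infDist_pt (frontier Ω)).tendsto y).comp hylim
    have := tendsto_nhds_unique t1 t2
    exact absurd this.symm (ne_of_gt (aux_pos Ω hΩ hfr hy))
  · rintro ⟨K, hK, hKΩ, hquasi⟩
    by_contra hcon
    have hfr : (frontier Ω).Nonempty := by
      rw [Set.nonempty_iff_ne_empty]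
      intro h
      rcases isClopen_iff.1 (isClopen_iff_frontier_eq_empty.2 h) with h' | h'
      · exact hne.ne_empty h'
      · exact hcon h'
    obtain ⟨x, hx⟩ := hfr
    have hxc : x ∈ closure Ω := hx.1
    obtain ⟨xk, hxk, hxlim⟩ := mem_closure_iff_seq_limit.1 hxc
    choose g hgG hgK using fun k => hquasi (xk k) (hxk k)
    obtain ⟨y, hyK, φ, hφ, hylim⟩ := hK.tendsto_subseq hgK
    have hd : ∀ k, infDist (g k (xk k)) (frontier Ω) = infDist (xk k) (frontier Ω) :=
      fun k => aux_infDist_inv Ω (g k) (hiso _ (hgG k)).1 (hiso _ (hgG k)).2 (hpres _ (hgG k)) _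
    have t1 : Tendsto (fun k => infDist (g (φ k) (xk (φ k))) (frontier Ω)) atTop (𝓝 0) := by
      simp only [hd]
      have := ((continuous_infDist_pt (frontier Ω)).tendsto x).comp (hxlim.comp hφ.tendsto_atTop)
      rwa [infDist_zero_of_mem hx] at this
    have t2 : Tendsto (fun k => infDist (g (φ k) (xk (φ k))) (frontier Ω)) atTop
        (𝓝 (infDist y (frontier Ω))) :=
      ((continuous_infDist_pt (frontier Ω)).tendsto y).comp hylim
    exact absurd (tendsto_nhds_unique t1 t2)
      (ne_of_lt (aux_pos Ω hΩ ⟨x, hx⟩ (hKΩ hyK)))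
end

section
/- Let (M, δ) be a metric space in which every curve γ : (I, d_I) → M from a family Γ is 1-Lipschitz, and suppose δ is the chain pseudodistance built from Γ (as for the Markowitz pseudodistance). If δ is a metric, then δ is a length metric: for all x, y ∈ M and ε > 0, there is a continuous curve α from x to y whose metric length with respect to δ satisfies L(α, δ) ≤ δ(x, y) + ε. -/
open Set

/-- The Poincaré distance on `I = (-1,1)`: `d_I(s,t) = |2 artanh t - 2 artanh s|`. -/
noncomputable def poincareDistI (s t : ℝ) : ℝ :=
  |Real.log ((1 + t) / (1 - t)) - Real.log ((1 + s) / (1 - s))|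

/-- The set of lengths of chains of curves from `Γ` joining `x` to `y`. -/
def chainSums {M : Type*} (Γ : Set (ℝ → M)) (x y : M) : Set ℝ :=
  {L | ∃ (m : ℕ) (γ : Fin (m + 1) → ℝ → M) (s t : Fin (m + 1) → ℝ),
    (∀ k, γ k ∈ Γ) ∧ (∀ k, s k ∈ Ioo (-1 : ℝ) 1) ∧ (∀ k, t k ∈ Ioo (-1 : ℝ) 1) ∧
    γ 0 (s 0) = x ∧ γ (Fin.last m) (t (Fin.last m)) = y ∧
    (∀ k : Fin m, γ k.castSucc (t k.castSucc) = γ k.succ (s k.succ)) ∧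
    L = ∑ k : Fin (m + 1), poincareDistI (s k) (t k)}

/-- The chain pseudodistance built from a family `Γ`. -/
noncomputable def chainPseudodist {M : Type*} (Γ : Set (ℝ → M)) (x y : M) : ℝ :=
  sInf (chainSums Γ x y)

/-! ### Hyperbolic helpers -/

/-- `2 artanh`. -/
noncomputable def fI (a : ℝ) : ℝ := Real.log ((1 + a) / (1 - a))

/-- The inverse of `fI`. -/
noncomputable def gI (w : ℝ) : ℝ := (Real.exp w - 1) / (Real.exp w + 1)

lemma poincare_eq (s t : ℝ) : poincareDistI s t = |fI t - fI s| := rfl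

lemma gI_mem (w : ℝ) : gI w ∈ Ioo (-1:ℝ) 1 := by
  have h := Real.exp_pos w
  constructor
  · rw [gI, lt_div_iff₀ (by linarith)]; linarith
  · rw [gI, div_lt_iff₀ (by linarith)]; linarith

lemma fI_gI (w : ℝ) : fI (gI w) = w := by
  have h := Real.exp_pos w
  have h1 : (1 + gI w) / (1 - gI w) = Real.exp w := by
    rw [gI]; field_simp; ring
  rw [fI, h1, Real.log_exp]

lemma gI_fI {a : ℝ} (ha : a ∈ Ioo (-1:ℝ) 1) : gI (fI a) = a := by
  obtain ⟨h1, h2⟩ := ha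
  have hp : (0:ℝ) < (1 + a) / (1 - a) := div_pos (by linarith) (by linarith)
  rw [gI, fI, Real.exp_log hp]
  have h2' : (0:ℝ) < (1 + a) / (1 - a) + 1 := by linarith
  rw [div_eq_iff (ne_of_gt h2')]
  have hne : (1:ℝ) - a ≠ 0 := by linarith
  field_simp
  ring

lemma fI_neg (a : ℝ) : fI (-a) = - fI a := by
  rw [fI, fI, ← Real.log_inv, inv_div]
  ring_nf

lemma poincare_symm_neg (a b : ℝ) : poincareDistI (-b) (-a) = poincareDistI a b := by
  rw [poincare_eq, poincare_eq, fI_neg, fI_neg]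
  congr 1; ring

lemma poincare_nonneg (s t : ℝ) : 0 ≤ poincareDistI s t := abs_nonneg _

/-- The geodesic in `I` from `sk` to `tk`, in `fI`-coordinates. -/
noncomputable def pPt (sk tk μ : ℝ) : ℝ := gI ((1 - μ) * fI sk + μ * fI tk)

lemma pPt_mem (sk tk μ : ℝ) : pPt sk tk μ ∈ Ioo (-1:ℝ) 1 := gI_mem _

lemma pPt_zero {sk : ℝ} (tk : ℝ) (h : sk ∈ Ioo (-1:ℝ) 1) : pPt sk tk 0 = sk := by
  rw [pPt]; norm_num; exact gI_fI h

lemma pPt_one (sk : ℝ) {tk : ℝ} (h : tk ∈ Ioo (-1:ℝ) 1) : pPt sk tk 1 = tk := by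
  rw [pPt]; norm_num; exact gI_fI h

lemma poincare_pPt (sk tk μ ν : ℝ) :
    poincareDistI (pPt sk tk μ) (pPt sk tk ν) = |ν - μ| * poincareDistI sk tk := by
  rw [poincare_eq, pPt, pPt, fI_gI, fI_gI, poincare_eq, ← abs_mul]
  congr 1; ring

/-! ### The clamp function and index function -/

/-- Clamped affine parameter of piece `k` (out of `n`) at time `u`. -/
noncomputable def clampI (n k : ℕ) (u : ℝ) : ℝ := min 1 (max 0 (u * n - k))

/-- Index of the active piece at time `u`. -/
noncomputable def idxI (m : ℕ) (u : ℝ) : Fin (m + 1) := ⟨min m ⌊u * (m + 1)⌋₊, by omega⟩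

lemma clampI_mono (n k : ℕ) {u v : ℝ} (huv : u ≤ v) : clampI n k u ≤ clampI n k v := by
  unfold clampI
  have : u * n ≤ v * n := by
    apply mul_le_mul_of_nonneg_right huv; positivity
  exact min_le_min le_rfl (max_le_max le_rfl (by linarith))

lemma clampI_lip (n k : ℕ) {u v : ℝ} (huv : u ≤ v) :
    clampI n k v - clampI n k u ≤ n * (v - u) := by
  unfold clampI
  have h : v * n - u * n = (n:ℝ) * (v - u) := by ring
  have hn : (0:ℝ) ≤ (n:ℝ) * (v - u) := by
    apply mul_nonneg (Nat.cast_nonneg n); linarith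
  rcases le_total (u * n - k) 0 with h1 | h1 <;>
    rcases le_total (v * n - k) 0 with h2 | h2 <;>
      rcases le_total (1:ℝ) (u * n - k) with h3 | h3 <;>
        rcases le_total (1:ℝ) (v * n - k) with h4 | h4 <;>
          simp [min_def, max_def] <;> split_ifs <;> linarith

lemma clampI_eq_one {n k : ℕ} {u : ℝ} (h : (k:ℝ) + 1 ≤ u * n) : clampI n k u = 1 := by
  unfold clampI
  rw [max_eq_right (by linarith), min_eq_left (by linarith)]

lemma clampI_eq_zero {n k : ℕ} {u : ℝ} (h : u * n ≤ (k:ℝ)) : clampI n k u = 0 := by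
  unfold clampI
  rw [max_eq_left (by linarith), min_eq_right (by norm_num)]

lemma idxI_le (m : ℕ) {u : ℝ} (hu : 0 ≤ u) : ((idxI m u : ℕ) : ℝ) ≤ u * (m + 1) := by
  have h1 : (idxI m u : ℕ) ≤ ⌊u * (m + 1)⌋₊ := min_le_right _ _
  have h2 : (⌊u * (m + 1)⌋₊ : ℝ) ≤ u * (m + 1) := Nat.floor_le (by positivity)
  calc ((idxI m u : ℕ) : ℝ) ≤ (⌊u * (m + 1)⌋₊ : ℝ) := by exact_mod_cast h1
    _ ≤ u * (m + 1) := h2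

lemma lt_idxI_succ (m : ℕ) {u : ℝ} (h : (idxI m u : ℕ) < m) :
    u * (m + 1) < (idxI m u : ℕ) + 1 := by
  have hfl : (idxI m u : ℕ) = ⌊u * (m + 1)⌋₊ := by
    have : min m ⌊u * (m + 1)⌋₊ < m := h
    simp only [idxI]
    omega
  rw [hfl]
  have := Nat.lt_floor_add_one (u * (m + 1))
  push_cast
  push_cast at this
  linarith

lemma idxI_mono (m : ℕ) {u v : ℝ} (huv : u ≤ v) : (idxI m u : ℕ) ≤ (idxI m v : ℕ) := by
  have : ⌊u * (m + 1)⌋₊ ≤ ⌊v * (m + 1)⌋₊ := by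
    apply Nat.floor_mono
    apply mul_le_mul_of_nonneg_right huv; positivity
  simp only [idxI]
  omega

lemma idxI_zero (m : ℕ) : idxI m 0 = 0 := by
  ext; simp [idxI]

lemma idxI_one (m : ℕ) : idxI m 1 = Fin.last m := by
  ext
  simp only [idxI, Fin.val_last]
  have : ⌊(1:ℝ) * (m + 1)⌋₊ = m + 1 := by
    rw [one_mul]
    exact_mod_cast Nat.floor_natCast (m+1) -- may fail; fix later
  omega

/-! ### chainSums basic facts -/

lemma chainSums_nonneg {M : Type*} (Γ : Set (ℝ → M)) (x y : M) :
    ∀ L ∈ chainSums Γ x y, 0 ≤ L := by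
  rintro L ⟨m, γ, s, t, -, -, -, -, -, -, rfl⟩
  exact Finset.sum_nonneg fun k _ => poincare_nonneg _ _

lemma chainSums_bddBelow {M : Type*} (Γ : Set (ℝ → M)) (x y : M) :
    BddBelow (chainSums Γ x y) :=
  ⟨0, fun L hL => chainSums_nonneg Γ x y L hL⟩

lemma chainPseudodist_le {M : Type*} {Γ : Set (ℝ → M)} {x y : M} {L : ℝ}
    (h : L ∈ chainSums Γ x y) : chainPseudodist Γ x y ≤ L :=
  csInf_le (chainSums_bddBelow Γ x y) h

lemma chainSums_symm {M : Type*} {Γ : Set (ℝ → M)}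
    (hrefl : ∀ γ ∈ Γ, (fun t : ℝ => γ (-t)) ∈ Γ) {x y : M} {L : ℝ}
    (h : L ∈ chainSums Γ x y) : L ∈ chainSums Γ y x := by
  obtain ⟨m, γ, s, t, hγ, hs, ht, hx, hy, hmatch, hL⟩ := h
  refine ⟨m, fun q => (fun r => γ q.rev (-r)), fun q => -(t q.rev), fun q => -(s q.rev),
    fun q => hrefl _ (hγ q.rev), fun q => ?_, fun q => ?_, ?_, ?_, fun q => ?_, ?_⟩
  · obtain ⟨h1, h2⟩ := ht q.rev
    simp only [Set.mem_Ioo]; constructor <;> linarith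
  · obtain ⟨h1, h2⟩ := hs q.rev
    simp only [Set.mem_Ioo]; constructor <;> linarith
  · simpa [Fin.rev_zero] using hy
  · simpa [Fin.rev_last] using hx
  · simp only [neg_neg, Fin.rev_castSucc, Fin.rev_succ]
    exact (hmatch q.rev).symm
  · rw [hL, ← Function.Bijective.sum_comp (Fin.rev_bijective)
      (fun k => poincareDistI (s k) (t k))]
    exact Finset.sum_congr rfl fun q _ => (poincare_symm_neg _ _).symm

/-! ### The key construction -/

lemma key_chain {M : Type*} (Γ : Set (ℝ → M))
    (m : ℕ) (γ : Fin (m + 1) → ℝ → M) (s t : Fin (m + 1) → ℝ)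
    (hγ : ∀ k, γ k ∈ Γ) (hs : ∀ k, s k ∈ Ioo (-1:ℝ) 1) (ht : ∀ k, t k ∈ Ioo (-1:ℝ) 1)
    (hmatch : ∀ k : Fin m, γ k.castSucc (t k.castSucc) = γ k.succ (s k.succ)) :
    ∃ (α : ℝ → M) (S : ℝ → ℝ),
      α 0 = γ 0 (s 0) ∧ α 1 = γ (Fin.last m) (t (Fin.last m)) ∧
      S 0 = 0 ∧ S 1 = ∑ k : Fin (m + 1), poincareDistI (s k) (t k) ∧
      (∀ u v : ℝ, 0 ≤ u → u ≤ v → v ≤ 1 →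
        S v - S u ∈ chainSums Γ (α u) (α v)) ∧
      (∀ u v : ℝ, u ≤ v →
        S v - S u ≤ (m + 1) * (∑ k : Fin (m + 1), poincareDistI (s k) (t k)) * (v - u)) := by
  refine ⟨fun u => γ (idxI m u) (pPt (s (idxI m u)) (t (idxI m u))
      (clampI (m + 1) (idxI m u) u)),
    fun u => ∑ k : Fin (m + 1), poincareDistI (s k) (t k) * clampI (m + 1) k u,
    ?_, ?_, ?_, ?_, ?_, ?_⟩
  · -- α 0 = γ 0 (s 0)
    have h0 : idxI m 0 = 0 := idxI_zero m
    simp only [h0]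
    have hc : clampI (m + 1) ((0 : Fin (m+1)) : ℕ) 0 = 0 :=
      clampI_eq_zero (by simp)
    rw [hc, pPt_zero _ (hs 0)]
  · -- α 1 = γ last (t last)
    have h1 : idxI m 1 = Fin.last m := idxI_one m
    simp only [h1]
    have hc : clampI (m + 1) ((Fin.last m : Fin (m+1)) : ℕ) 1 = 1 := by
      apply clampI_eq_one
      simp [Fin.val_last]
    rw [hc, pPt_one _ (ht (Fin.last m))]
  · -- S 0 = 0
    apply Finset.sum_eq_zero
    intro k _
    rw [clampI_eq_zero (by norm_num), mul_zero]
  · -- S 1 = total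
    apply Finset.sum_congr rfl
    intro k _
    rw [clampI_eq_one, mul_one]
    have hk : ((k:ℕ):ℝ) ≤ (m:ℝ) := by exact_mod_cast Fin.is_le k
    push_cast
    linarith
  · -- membership
    intro u v hu huv hv
    have hv0 : (0:ℝ) ≤ v := le_trans hu huv
    set i := idxI m u with hidef
    set j := idxI m v with hjdef
    have hij : (i : ℕ) ≤ (j : ℕ) := idxI_mono m huv
    have hjm : (j : ℕ) ≤ m := Fin.is_le j
    have him : (i : ℕ) ≤ m := Fin.is_le i
    -- vanishing of increments outside [i, j]
    have hvanish : ∀ k : Fin (m + 1), ((k:ℕ) < (i:ℕ) ∨ (j:ℕ) < (k:ℕ)) →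
        clampI (m + 1) k v - clampI (m + 1) k u = 0 := by
      intro k hk
      rcases hk with hk | hk
      · have h1 : ((k:ℕ):ℝ) + 1 ≤ u * (m + 1) := by
          have := idxI_le m hu
          rw [← hidef] at this
          have hki : ((k:ℕ):ℝ) + 1 ≤ ((i:ℕ):ℝ) := by exact_mod_cast hk
          push_cast at this ⊢
          linarith
        have h2 : ((k:ℕ):ℝ) + 1 ≤ v * (m + 1) := by
          have hmono : u * (m+1) ≤ v * (m+1) := by
            apply mul_le_mul_of_nonneg_right huv; positivity
          linarith
        rw [clampI_eq_one (by exact_mod_cast h2), clampI_eq_one (by exact_mod_cast h1),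
          sub_self]
      · have hjlt : (j : ℕ) < m := lt_of_lt_of_le hk (Fin.is_le k)
        have h2 : v * (m + 1) ≤ ((k:ℕ):ℝ) := by
          have := lt_idxI_succ m (u := v) (by rw [← hjdef]; exact hjlt)
          rw [← hjdef] at this
          have hkj : ((j:ℕ):ℝ) + 1 ≤ ((k:ℕ):ℝ) := by exact_mod_cast hk
          push_cast at this ⊢
          linarith
        have h1 : u * (m + 1) ≤ ((k:ℕ):ℝ) := by
          have hmono : u * (m+1) ≤ v * (m+1) := by
            apply mul_le_mul_of_nonneg_right huv; positivity
          linarith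
        rw [clampI_eq_zero (by exact_mod_cast h2), clampI_eq_zero (by exact_mod_cast h1),
          sub_self]
    -- the subchain
    refine ⟨(j : ℕ) - (i : ℕ),
      fun q => γ ⟨(i:ℕ) + (q:ℕ), by have := q.isLt; omega⟩,
      fun q => pPt (s ⟨(i:ℕ) + (q:ℕ), by have := q.isLt; omega⟩)
        (t ⟨(i:ℕ) + (q:ℕ), by have := q.isLt; omega⟩)
        (clampI (m + 1) ((i:ℕ) + (q:ℕ)) u),
      fun q => pPt (s ⟨(i:ℕ) + (q:ℕ), by have := q.isLt; omega⟩)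
        (t ⟨(i:ℕ) + (q:ℕ), by have := q.isLt; omega⟩)
        (clampI (m + 1) ((i:ℕ) + (q:ℕ)) v),
      fun q => hγ _, fun q => pPt_mem _ _ _, fun q => pPt_mem _ _ _, ?_, ?_, ?_, ?_⟩
    · -- left endpoint
      simp only [Fin.val_zero, add_zero, Fin.eta]
      rfl
    · -- right endpoint
      simp only [Fin.val_last, show (i:ℕ) + ((j:ℕ) - (i:ℕ)) = (j:ℕ) from by omega, Fin.eta]
      rfl
    · -- matching
      intro q
      have hql := q.isLt
      have h1 : clampI (m + 1) ((i:ℕ) + (q:ℕ)) v = 1 := by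
        apply clampI_eq_one
        have hle : ((i:ℕ) + (q:ℕ) : ℕ) + 1 ≤ (j:ℕ) := by omega
        have := idxI_le m hv0
        rw [← hjdef] at this
        have : (((i:ℕ) + (q:ℕ) + 1 : ℕ) : ℝ) ≤ ((j:ℕ):ℝ) := by exact_mod_cast hle
        push_cast at this ⊢
        have h2 := idxI_le m hv0
        rw [← hjdef] at h2
        push_cast at h2
        linarith
      have h0 : clampI (m + 1) ((i:ℕ) + ((q:ℕ) + 1)) u = 0 := by
        apply clampI_eq_zero
        have hilt : (i:ℕ) < m := by omega
        have := lt_idxI_succ m (u := u) (by rw [← hidef]; exact hilt)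
        rw [← hidef] at this
        push_cast at this ⊢
        linarith
      simp only [Fin.coe_castSucc, Fin.val_succ]
      rw [h1, h0, pPt_one _ (ht _), pPt_zero _ (hs _)]
      exact hmatch ⟨(i:ℕ) + (q:ℕ), by omega⟩
    · -- sum identity
      have hterm : ∀ q : Fin ((j:ℕ) - (i:ℕ) + 1),
          poincareDistI
            (pPt (s ⟨(i:ℕ) + (q:ℕ), by have := q.isLt; omega⟩)
              (t ⟨(i:ℕ) + (q:ℕ), by have := q.isLt; omega⟩)
              (clampI (m + 1) ((i:ℕ) + (q:ℕ)) u))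
            (pPt (s ⟨(i:ℕ) + (q:ℕ), by have := q.isLt; omega⟩)
              (t ⟨(i:ℕ) + (q:ℕ), by have := q.isLt; omega⟩)
              (clampI (m + 1) ((i:ℕ) + (q:ℕ)) v)) =
          poincareDistI (s ⟨(i:ℕ) + (q:ℕ), by have := q.isLt; omega⟩)
              (t ⟨(i:ℕ) + (q:ℕ), by have := q.isLt; omega⟩) *
            (clampI (m + 1) ((i:ℕ) + (q:ℕ)) v - clampI (m + 1) ((i:ℕ) + (q:ℕ)) u) := by
        intro q
        rw [poincare_pPt, abs_of_nonneg (by linarith [clampI_mono (m+1) ((i:ℕ)+(q:ℕ)) huv]),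
          mul_comm]
      beta_reduce
      have hemb : ∀ q : Fin ((j:ℕ) - (i:ℕ) + 1), (i:ℕ) + (q:ℕ) < m + 1 := by
        intro q; have := q.isLt; omega
      set emb : Fin ((j:ℕ) - (i:ℕ) + 1) → Fin (m+1) := fun q => ⟨(i:ℕ) + (q:ℕ), hemb q⟩
        with hembdef
      have hinj : ∀ a ∈ Finset.univ, ∀ b ∈ Finset.univ, emb a = emb b → a = b := by
        intro a _ b _ hab
        have hval : (i:ℕ) + (a:ℕ) = (i:ℕ) + (b:ℕ) := congrArg Fin.val hab
        ext; omega
      have himg : ∀ k ∈ Finset.univ, k ∉ Finset.univ.image emb →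
          poincareDistI (s k) (t k) * (clampI (m+1) k v - clampI (m+1) k u) = 0 := by
        intro k _ hk
        have hor : (k:ℕ) < (i:ℕ) ∨ (j:ℕ) < (k:ℕ) := by
          by_contra hcon
          push_neg at hcon
          apply hk
          refine Finset.mem_image.mpr ⟨⟨(k:ℕ) - (i:ℕ), by omega⟩, Finset.mem_univ _, ?_⟩
          rw [hembdef]
          ext
          simp only
          omega
        rw [hvanish k hor, mul_zero]
      have key : ∑ k : Fin (m+1),
            poincareDistI (s k) (t k) * (clampI (m+1) (k:ℕ) v - clampI (m+1) (k:ℕ) u)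
          = ∑ q : Fin ((j:ℕ) - (i:ℕ) + 1), poincareDistI (s (emb q)) (t (emb q)) *
            (clampI (m+1) ((emb q):ℕ) v - clampI (m+1) ((emb q):ℕ) u) := by
        rw [← Finset.sum_image (g := emb) (f := fun k : Fin (m+1) =>
          poincareDistI (s k) (t k) * (clampI (m+1) (k:ℕ) v - clampI (m+1) (k:ℕ) u)) hinj]
        exact (Finset.sum_subset (Finset.subset_univ _) himg).symm
      have hdistrib : (∑ k : Fin (m+1), poincareDistI (s k) (t k) * clampI (m+1) (k:ℕ) v) -
          (∑ k : Fin (m+1), poincareDistI (s k) (t k) * clampI (m+1) (k:ℕ) u) =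
          ∑ k : Fin (m+1),
            poincareDistI (s k) (t k) * (clampI (m+1) (k:ℕ) v - clampI (m+1) (k:ℕ) u) := by
        rw [← Finset.sum_sub_distrib]
        exact Finset.sum_congr rfl fun k _ => by ring
      rw [hdistrib, key]
      exact Finset.sum_congr rfl fun q _ => (hterm q).symm
  · -- Lipschitz bound for S
    intro u v huv
    rw [← Finset.sum_sub_distrib]
    have hbd : ∀ k : Fin (m + 1), poincareDistI (s k) (t k) * clampI (m + 1) k v -
        poincareDistI (s k) (t k) * clampI (m + 1) k u ≤
        poincareDistI (s k) (t k) * ((m + 1) * (v - u)) := by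
      intro k
      rw [← mul_sub]
      apply mul_le_mul_of_nonneg_left _ (poincare_nonneg _ _)
      have := clampI_lip (m + 1) k huv
      push_cast at this ⊢
      linarith
    calc ∑ k : Fin (m+1), (poincareDistI (s k) (t k) * clampI (m + 1) k v -
          poincareDistI (s k) (t k) * clampI (m + 1) k u)
        ≤ ∑ k : Fin (m+1), poincareDistI (s k) (t k) * ((m + 1) * (v - u)) :=
          Finset.sum_le_sum fun k _ => hbd k
      _ = (m + 1) * (∑ k : Fin (m + 1), poincareDistI (s k) (t k)) * (v - u) := by
          rw [← Finset.sum_mul]; ring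

/-- If the chain pseudodistance `δ` built from `Γ` is a metric, then it is a length
metric: for all `x, y` and `ε > 0`, there is a `δ`-continuous curve `α : [0,1] → M`
from `x` to `y` all of whose partition sums (hence whose `δ`-metric length) are at
most `δ(x,y) + ε`. -/
theorem stmt_10 {M : Type*} (Γ : Set (ℝ → M))
    (hrefl : ∀ γ ∈ Γ, (fun t : ℝ => γ (-t)) ∈ Γ)
    (hconn : ∀ x y : M, (chainSums Γ x y).Nonempty)
    (hdef : ∀ x y : M, chainPseudodist Γ x y = 0 → x = y) :
    ∀ x y : M, ∀ ε > (0 : ℝ), ∃ α : ℝ → M,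
      α 0 = x ∧ α 1 = y ∧
      (∀ s ∈ Icc (0 : ℝ) 1, ∀ η > (0 : ℝ), ∃ ρ > (0 : ℝ), ∀ t ∈ Icc (0 : ℝ) 1,
        |t - s| < ρ → chainPseudodist Γ (α s) (α t) < η) ∧
      (∀ (N : ℕ) (u : Fin (N + 1) → ℝ), Monotone u →
        u 0 = 0 → u (Fin.last N) = 1 → (∀ k, u k ∈ Icc (0 : ℝ) 1) →
        ∑ k : Fin N, chainPseudodist Γ (α (u k.castSucc)) (α (u k.succ))
          ≤ chainPseudodist Γ x y + ε) := by
  intro x y ε hε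
  obtain ⟨L₀, hL₀mem, hL₀lt⟩ := Real.lt_sInf_add_pos (hconn x y) hε
  obtain ⟨m, γ, s, t, hγ, hs, ht, hx, hy, hmatch, hLsum⟩ := hL₀mem
  obtain ⟨α, S, hα0, hα1, hS0, hS1, hmem, hlip⟩ := key_chain Γ m γ s t hγ hs ht hmatch
  rw [hx] at hα0
  rw [hy] at hα1
  set Ltot := ∑ k : Fin (m+1), poincareDistI (s k) (t k) with hLtot
  have hLtot0 : 0 ≤ Ltot := Finset.sum_nonneg fun k _ => poincare_nonneg _ _
  set C := ((m:ℝ) + 1) * Ltot with hC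
  have hC0 : 0 ≤ C := by positivity
  refine ⟨α, hα0, hα1, ?_, ?_⟩
  · -- continuity
    intro a ha η hη
    refine ⟨η / (C + 1), by positivity, ?_⟩
    intro b hb hab
    have hbound : chainPseudodist Γ (α a) (α b) ≤ C * |b - a| := by
      rcases le_total a b with h | h
      · have hm := hmem a b ha.1 h hb.2
        calc chainPseudodist Γ (α a) (α b) ≤ S b - S a := chainPseudodist_le hm
          _ ≤ C * (b - a) := hlip a b h
          _ = C * |b - a| := by rw [abs_of_nonneg (by linarith)]
      · have hm := hmem b a hb.1 h ha.2
        have hm' := chainSums_symm hrefl hm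
        calc chainPseudodist Γ (α a) (α b) ≤ S a - S b := chainPseudodist_le hm'
          _ ≤ C * (a - b) := hlip b a h
          _ = C * |b - a| := by rw [abs_sub_comm, abs_of_nonneg (by linarith)]
    have h4 : C * (η / (C + 1)) < η := by
      rw [mul_comm, div_mul_eq_mul_div, div_lt_iff₀ (by linarith)]
      nlinarith
    have h3 : C * |b - a| ≤ C * (η / (C + 1)) :=
      mul_le_mul_of_nonneg_left (le_of_lt hab) hC0
    exact lt_of_le_of_lt hbound (lt_of_le_of_lt h3 h4)
  · -- partition sums
    intro N u hmono hu0 hulast huIcc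
    have hstep : ∀ k : Fin N, chainPseudodist Γ (α (u k.castSucc)) (α (u k.succ)) ≤
        S (u k.succ) - S (u k.castSucc) := by
      intro k
      apply chainPseudodist_le
      exact hmem _ _ (huIcc _).1 (hmono (Fin.castSucc_le_succ k)) (huIcc _).2
    have htel : ∑ k : Fin N, (S (u k.succ) - S (u k.castSucc)) =
        S (u (Fin.last N)) - S (u 0) := by
      have hw : ∀ k : Fin N, S (u k.succ) - S (u k.castSucc) =
          (fun n : ℕ => S (u ⟨min n N, by omega⟩)) ((k:ℕ) + 1) -
          (fun n : ℕ => S (u ⟨min n N, by omega⟩)) (k:ℕ) := by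
        intro k
        have h1 : (⟨min ((k:ℕ)+1) N, by omega⟩ : Fin (N+1)) = k.succ := by
          ext; simp only [Fin.val_succ]; omega
        have h2 : (⟨min (k:ℕ) N, by omega⟩ : Fin (N+1)) = k.castSucc := by
          ext; simp only [Fin.coe_castSucc]; omega
        simp only [h1, h2]
      rw [Finset.sum_congr rfl fun k _ => hw k,
        Fin.sum_univ_eq_sum_range (fun n => (fun n : ℕ => S (u ⟨min n N, by omega⟩)) (n+1) -
          (fun n : ℕ => S (u ⟨min n N, by omega⟩)) n) N,
        Finset.sum_range_sub (fun n : ℕ => S (u ⟨min n N, by omega⟩))]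
      have hN : (⟨min N N, by omega⟩ : Fin (N+1)) = Fin.last N := by
        ext; simp
      have h0 : (⟨min 0 N, by omega⟩ : Fin (N+1)) = 0 := by
        ext; simp
      simp only [hN, h0]
    calc ∑ k : Fin N, chainPseudodist Γ (α (u k.castSucc)) (α (u k.succ))
        ≤ ∑ k : Fin N, (S (u k.succ) - S (u k.castSucc)) :=
          Finset.sum_le_sum fun k _ => hstep k
      _ = S (u (Fin.last N)) - S (u 0) := htel
      _ = L₀ := by rw [hulast, hu0, hS1, hS0, sub_zero, ← hLsum]
      _ ≤ chainPseudodist Γ x y + ε := le_of_lt hL₀lt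
end

section
/- On Ω = ℝˡ × I⁺(0) ⊆ ℝ^{1,n} (with ℝ^{1,n} = ℝˡ ⊕ ℝ^{1,n−ℓ} an orthogonal splitting, and I⁺(0) the open future cone in ℝ^{1,n−ℓ}), let φ_t(u, v) = (u, eᵗ·v). Then φ_t pulls back the volume form dVol of the metric g = (1/‖v‖²)·β — where β is the flat metric and ‖v‖² = |β(v,v)| — by the formula φ_t^* dVol_g = e^{−tℓ} dVol_g. Consequently, if a group Γ of diffeomorphisms preserving dVol_g and commuting with all φ_t acts with compact quotient of finite positive g-volume, then ℓ = 0. -/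
/-!
The flow `φ_t = id × (eᵗ • ·)` multiplies Lebesgue measure on the `(m + 1)`-dimensional
`v`-factor by `e^{t(m+1)}`, while the density `‖v‖^{-(l+m+1)}` of `dVol_g` is homogeneous of
degree `-(l+m+1)` along it; the net factor is `e^{-tl}`. A finite positive volume that is
invariant under the flow then forces `e^{-l} = 1`.
-/

open MeasureTheory Measure Module

namespace MeasurableEquiv

variable {α : Type*} [MeasurableSpace α]

theorem withDensity_image_of_map_symm_eq_smul (μ : Measure α) (e : α ≃ᵐ α) {ρ : α → ENNReal}
    (hρ : Measurable ρ) {a b : ENNReal} (hμ : map e.symm μ = a • μ) (hρe : ∀ x, ρ (e x) = b * ρ x)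
    {A : Set α} (hA : MeasurableSet A) :
    μ.withDensity ρ (e '' A) = a * b * μ.withDensity ρ A := by
  rw [e.image_eq_preimage_symm, withDensity_apply _ (e.symm.measurableSet_preimage.2 hA),
    withDensity_apply _ hA]
  calc ∫⁻ x in e.symm ⁻¹' A, ρ x ∂μ = ∫⁻ x in e.symm ⁻¹' A, ρ (e (e.symm x)) ∂μ := by
        simp only [apply_symm_apply]
    _ = ∫⁻ y in A, ρ (e y) ∂(map e.symm μ) :=
        (setLIntegral_map hA (hρ.comp e.measurable) e.symm.measurable).symm
    _ = a * b * ∫⁻ y in A, ρ y ∂μ := by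
        simp only [hμ, hρe, restrict_smul, lintegral_smul_measure, smul_eq_mul,
          lintegral_const_mul _ hρ, mul_left_comm b, mul_assoc]

end MeasurableEquiv

instance Prod.volume_isAddHaarMeasure {E F : Type*} [AddGroup E] [TopologicalSpace E]
    [MeasureSpace E] [MeasurableAdd E] [SFinite (volume : Measure E)]
    [(volume : Measure E).IsAddHaarMeasure] [AddGroup F] [TopologicalSpace F] [MeasureSpace F]
    [MeasurableAdd F] [SFinite (volume : Measure F)] [(volume : Measure F).IsAddHaarMeasure] :
    (volume : Measure (E × F)).IsAddHaarMeasure :=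
  inferInstanceAs ((volume.prod volume).IsAddHaarMeasure)

section Dilation

variable (α E : Type*) [MeasurableSpace α] [NormedAddCommGroup E] [NormedSpace ℝ E]
  [MeasurableSpace E] [BorelSpace E]

noncomputable def dilationFlow (t : ℝ) : α × E ≃ᵐ α × E :=
  (MeasurableEquiv.refl α).prodCongr (MeasurableEquiv.smul₀ (Real.exp t) (Real.exp_ne_zero t))

variable {α E}

@[simp]
theorem dilationFlow_apply (t : ℝ) (p : α × E) : dilationFlow α E t p = (p.1, Real.exp t • p.2) :=
  rfl

theorem dilationFlow_symm (t : ℝ) : (dilationFlow α E t).symm = dilationFlow α E (-t) := by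
  refine MeasurableEquiv.ext (funext fun p => (dilationFlow α E t).injective ?_)
  simp [smul_smul, ← Real.exp_add]

theorem map_dilationFlow_prod [FiniteDimensional ℝ E] (ν : Measure α) [SFinite ν]
    (μ : Measure E) [μ.IsAddHaarMeasure] (t : ℝ) :
    map (dilationFlow α E t) (ν.prod μ)
      = ENNReal.ofReal (Real.exp (-(t * finrank ℝ E))) • ν.prod μ := by
  have hexp : |(Real.exp t ^ finrank ℝ E)⁻¹| = Real.exp (-(t * finrank ℝ E)) := by
    rw [← Real.exp_nat_mul, ← Real.exp_neg, abs_of_pos (Real.exp_pos _), mul_comm]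
  rw [show ⇑(dilationFlow α E t) = Prod.map id (Real.exp t • ·) from rfl,
    ← map_prod_map _ _ measurable_id (measurable_const_smul _), map_id,
    map_addHaar_smul μ (Real.exp_ne_zero t), prod_smul_right, hexp]

end Dilation

section ConformalDensity

variable {α E : Type*} [NormedAddCommGroup E]

/-- On the future cone this is the Minkowski norm `‖v‖`; outside it `Real.sqrt` truncates to `0`. -/
noncomputable def lorentzNorm (v : ℝ × E) : ℝ := √(v.1 ^ 2 - ‖v.2‖ ^ 2)

theorem lorentzNorm_nonneg (v : ℝ × E) : 0 ≤ lorentzNorm v := Real.sqrt_nonneg _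

theorem lorentzNorm_smul [NormedSpace ℝ E] (c : ℝ) (v : ℝ × E) :
    lorentzNorm (c • v) = |c| * lorentzNorm v := by
  simp only [lorentzNorm, Prod.smul_fst, Prod.smul_snd, smul_eq_mul, norm_smul, Real.norm_eq_abs,
    mul_pow, sq_abs, ← mul_sub, Real.sqrt_mul (sq_nonneg c), Real.sqrt_sq_eq_abs]

noncomputable def conformalDensity (k : ℝ) (p : α × ℝ × E) : ENNReal :=
  ENNReal.ofReal (lorentzNorm p.2 ^ (-k))

theorem measurable_conformalDensity [MeasurableSpace α] [MeasurableSpace E] [BorelSpace E]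
    (k : ℝ) : Measurable (conformalDensity (α := α) (E := E) k) := by
  unfold conformalDensity lorentzNorm
  fun_prop

theorem conformalDensity_dilationFlow [MeasurableSpace α] [NormedSpace ℝ E] [MeasurableSpace E]
    [BorelSpace E] (k t : ℝ) (p : α × ℝ × E) :
    conformalDensity k (dilationFlow α (ℝ × E) t p)
      = ENNReal.ofReal (Real.exp (-(t * k))) * conformalDensity k p := by
  rw [conformalDensity, conformalDensity, dilationFlow_apply, lorentzNorm_smul,
    abs_of_pos (Real.exp_pos t), Real.mul_rpow (Real.exp_pos t).le (lorentzNorm_nonneg _),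
    ← Real.exp_mul, ENNReal.ofReal_mul (Real.exp_pos _).le, mul_neg]

end ConformalDensity

theorem ENNReal.eq_zero_of_eq_ofReal_exp_mul {c : ENNReal} (hc0 : c ≠ 0) (hctop : c ≠ ⊤) {k : ℝ}
    (h : c = ENNReal.ofReal (Real.exp (-k)) * c) : k = 0 := by
  have h1 := (ENNReal.mul_eq_right hc0 hctop).1 h.symm
  rwa [ENNReal.ofReal_eq_one, Real.exp_eq_one_iff, neg_eq_zero] at h1

/-- On `Ω = ℝˡ × I⁺(0) ⊆ ℝ^{1,n}` (`n = l + m`), the flow `φ_t(u,v) = (u, eᵗ·v)`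
scales the volume measure of the conformally flat metric `g = β/‖v‖²` (with volume
density `‖v‖^{-(n+1)}`, `‖v‖ = √(v₀² - |v'|²)` on the cone) by the factor `e^{-t·l}`.
Consequently a finite positive total volume invariant under all `φ_t` forces `l = 0`. -/
theorem stmt_13 (l m : ℕ) :
    let X := (Fin l → ℝ) × ℝ × EuclideanSpace ℝ (Fin m)
    let Ω : Set X := {p | ‖p.2.2‖ < p.2.1}
    let φ : ℝ → X → X := fun t p => (p.1, Real.exp t * p.2.1, Real.exp t • p.2.2)
    let μg : Measure X := volume.withDensity
      (fun p => ENNReal.ofReal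
        (Real.sqrt (p.2.1 ^ 2 - ‖p.2.2‖ ^ 2) ^ (-((l + m + 1 : ℕ) : ℝ))))
    (∀ (t : ℝ) (A : Set X), A ⊆ Ω → MeasurableSet A →
      μg (φ t '' A) = ENNReal.ofReal (Real.exp (-(t * l))) * μg A) ∧
    (∀ c : ENNReal, c ≠ 0 → c ≠ ⊤ →
      (∀ t : ℝ, c = ENNReal.ofReal (Real.exp (-(t * l))) * c) → l = 0) := by
  intro X Ω φ μg
  refine ⟨fun t A _ hA => ?_, fun c hc0 hctop hc => ?_⟩
  · have hdim : finrank ℝ (ℝ × EuclideanSpace ℝ (Fin m)) = m + 1 := by simp [add_comm]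
    have hvol := map_dilationFlow_prod (volume : Measure (Fin l → ℝ))
      (volume : Measure (ℝ × EuclideanSpace ℝ (Fin m))) (-t)
    rw [← dilationFlow_symm] at hvol
    calc μg (φ t '' A)
        = ENNReal.ofReal (Real.exp (-(-t * (m + 1 : ℕ))))
          * ENNReal.ofReal (Real.exp (-(t * (l + m + 1 : ℕ)))) * μg A := by
          rw [← hdim]
          exact MeasurableEquiv.withDensity_image_of_map_symm_eq_smul volume _
            (measurable_conformalDensity _) hvol (conformalDensity_dilationFlow _ t) hA
      _ = ENNReal.ofReal (Real.exp (-(t * l))) * μg A := by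
          rw [← ENNReal.ofReal_mul (Real.exp_pos _).le, ← Real.exp_add]
          push_cast
          ring_nf
  · exact_mod_cast ENNReal.eq_zero_of_eq_ofReal_exp_mul (k := l) hc0 hctop (by simpa using hc 1)
end
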